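/- If Z_1,...,Z_n are i.i.d. zero-mean generalized Gaussian random variables with shape parameter p and scale parameter \alpha, then X = \sum_{i=1}^n |Z_i|^p follows a Gamma distribution with shape parameter n/p and scale parameter \alpha^p; that is, X has density f_X(x) = x^{n/p - 1} e^{-x/\alpha^p} / (\Gamma(n/p) \alpha^n) for x \geq 0. -/

import Mathlib

open MeasureTheory Set Real ProbabilityTheory

lemma betaReal_integrable {a b : ℝ} (ha : 0 < a) (hb : 0 < b) :
    IntervalIntegrable (fun x : ℝ => x ^ (a - 1) * (1 - x) ^ (b - 1)) volume 0 1 := by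
  have hc : IntervalIntegrable (fun x : ℝ => (x : ℂ) ^ ((a : ℂ) - 1) * (1 - (x : ℂ)) ^ ((b : ℂ) - 1))
      volume 0 1 := Complex.betaIntegral_convergent (by simpa using ha) (by simpa using hb)
  have hn := hc.norm
  rw [intervalIntegrable_iff_integrableOn_Ioo_of_le zero_le_one] at hn ⊢
  refine hn.congr_fun (fun x hx => ?_) measurableSet_Ioo
  obtain ⟨hx0, hx1⟩ := hx
  have h1 : (0:ℝ) < 1 - x := by linarith
  dsimp only
  rw [norm_mul]
  have e1 : ‖(x : ℂ) ^ ((a : ℂ) - 1)‖ = x ^ (a - 1) := by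
    rw [Complex.norm_cpow_eq_rpow_re_of_pos hx0]
    norm_num
  have e2 : ‖(1 - (x : ℂ)) ^ ((b : ℂ) - 1)‖ = (1 - x) ^ (b - 1) := by
    have : (1 - (x:ℂ)) = ((1 - x : ℝ) : ℂ) := by push_cast; ring
    rw [this, Complex.norm_cpow_eq_rpow_re_of_pos h1]
    norm_num
  rw [e1, e2]

lemma betaReal_eq {a b : ℝ} (ha : 0 < a) (hb : 0 < b) :
    ∫ x in (0:ℝ)..1, x ^ (a - 1) * (1 - x) ^ (b - 1)
      = Real.Gamma a * Real.Gamma b / Real.Gamma (a + b) := by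
  have key := Complex.Gamma_mul_Gamma_eq_betaIntegral (s := (a:ℂ)) (t := (b:ℂ))
    (by simpa using ha) (by simpa using hb)
  have hbeta : Complex.betaIntegral (a : ℂ) (b : ℂ)
      = ((∫ x in (0:ℝ)..1, x ^ (a - 1) * (1 - x) ^ (b - 1) : ℝ) : ℂ) := by
    rw [Complex.betaIntegral, ← intervalIntegral.integral_ofReal]
    refine intervalIntegral.integral_congr (fun x hx => ?_)
    rw [uIcc_of_le zero_le_one] at hx
    obtain ⟨hx0, hx1⟩ := hx
    rw [Complex.ofReal_mul, Complex.ofReal_cpow hx0, Complex.ofReal_cpow (by linarith : (0:ℝ) ≤ 1 - x)]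
    push_cast
    ring
  rw [hbeta] at key
  have hG : Complex.Gamma ((a:ℂ) + b) = ((Real.Gamma (a + b) : ℝ) : ℂ) := by
    rw [← Complex.ofReal_add, Complex.Gamma_ofReal]
  rw [Complex.Gamma_ofReal, Complex.Gamma_ofReal, hG] at key
  have key' : Gamma a * Gamma b
      = Gamma (a + b) * ∫ x in (0:ℝ)..1, x ^ (a - 1) * (1 - x) ^ (b - 1) := by
    exact_mod_cast key
  rw [eq_div_iff (Gamma_pos_of_pos (by linarith)).ne']
  linarith [key']

lemma betaScaled_integrable {a b u : ℝ} (ha : 0 < a) (hb : 0 < b) (hu : 0 < u) :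
    IntervalIntegrable (fun x : ℝ => x ^ (a - 1) * (u - x) ^ (b - 1)) volume 0 u := by
  have h1 := ((betaReal_integrable ha hb).comp_mul_left (c := u⁻¹)).const_mul (u ^ (a + b - 2))
  have h2 : (0:ℝ) / u⁻¹ = 0 := by simp
  have h3 : (1:ℝ) / u⁻¹ = u := by field_simp
  rw [h2, h3] at h1
  rw [intervalIntegrable_iff_integrableOn_Ioo_of_le hu.le] at h1 ⊢
  refine h1.congr_fun (fun x hx => ?_) measurableSet_Ioo
  obtain ⟨hx0, hxu⟩ := hx
  have e1 : (u⁻¹ * x) ^ (a - 1) = (u⁻¹) ^ (a - 1) * x ^ (a - 1) :=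
    mul_rpow (by positivity) hx0.le
  have e2 : 1 - u⁻¹ * x = u⁻¹ * (u - x) := by field_simp
  have e3 : (u⁻¹ * (u - x)) ^ (b - 1) = (u⁻¹) ^ (b - 1) * (u - x) ^ (b - 1) :=
    mul_rpow (by positivity) (by linarith)
  dsimp only
  rw [e1, e2, e3]
  have e4 : u ^ (a + b - 2) * (u⁻¹ ^ (a - 1) * x ^ (a - 1) * (u⁻¹ ^ (b - 1) * (u - x) ^ (b - 1)))
      = (u ^ (a + b - 2) * u⁻¹ ^ (a - 1) * u⁻¹ ^ (b - 1)) * (x ^ (a - 1) * (u - x) ^ (b - 1)) := by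
    ring
  rw [e4, ← rpow_neg_one u, ← Real.rpow_mul hu.le, ← Real.rpow_mul hu.le,
    ← rpow_add hu, ← rpow_add hu,
    show a + b - 2 + -1 * (a - 1) + -1 * (b - 1) = 0 by ring, rpow_zero, one_mul]

lemma betaScaled_eq {a b u : ℝ} (ha : 0 < a) (hb : 0 < b) (hu : 0 < u) :
    ∫ x in (0:ℝ)..u, x ^ (a - 1) * (u - x) ^ (b - 1)
      = u ^ (a + b - 1) * (Real.Gamma a * Real.Gamma b / Real.Gamma (a + b)) := by
  have hsub := intervalIntegral.integral_comp_mul_left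
    (fun x : ℝ => x ^ (a - 1) * (u - x) ^ (b - 1)) (a := 0) (b := 1) hu.ne'
  rw [mul_zero, mul_one] at hsub
  have hcong : ∫ x in (0:ℝ)..1, (u * x) ^ (a - 1) * (u - u * x) ^ (b - 1)
      = ∫ x in (0:ℝ)..1, u ^ (a + b - 2) * (x ^ (a - 1) * (1 - x) ^ (b - 1)) := by
    refine intervalIntegral.integral_congr (fun x hx => ?_)
    rw [uIcc_of_le zero_le_one] at hx
    obtain ⟨hx0, hx1⟩ := hx
    have e1 : (u * x) ^ (a - 1) = u ^ (a - 1) * x ^ (a - 1) := mul_rpow hu.le hx0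
    have e2 : u - u * x = u * (1 - x) := by ring
    have e3 : (u * (1 - x)) ^ (b - 1) = u ^ (b - 1) * (1 - x) ^ (b - 1) :=
      mul_rpow hu.le (by linarith)
    rw [e1, e2, e3,
      show u ^ (a-1) * x ^ (a-1) * (u ^ (b-1) * (1-x) ^ (b-1))
        = u ^ (a-1) * u ^ (b-1) * (x ^ (a-1) * (1-x) ^ (b-1)) by ring,
      ← rpow_add hu, show a - 1 + (b - 1) = a + b - 2 by ring]
  simp only [smul_eq_mul] at hsub
  rw [hcong, intervalIntegral.integral_const_mul, betaReal_eq ha hb] at hsub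
  calc ∫ x in (0:ℝ)..u, x ^ (a - 1) * (u - x) ^ (b - 1)
      = u * (u⁻¹ * ∫ x in (0:ℝ)..u, x ^ (a - 1) * (u - x) ^ (b - 1)) := by
        field_simp
    _ = u * (u ^ (a + b - 2) * (Real.Gamma a * Real.Gamma b / Real.Gamma (a + b))) := by
        rw [← hsub]
    _ = u ^ (a + b - 1) * (Real.Gamma a * Real.Gamma b / Real.Gamma (a + b)) := by
        nth_rewrite 1 [← rpow_one u]
        rw [← mul_assoc, ← rpow_add hu, show (1:ℝ) + (a + b - 2) = a + b - 1 by ring]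

lemma gamma_conv_pointwise {a b r : ℝ} (ha : 0 < a) (hb : 0 < b) (hr : 0 < r)
    {u : ℝ} (hu : u ≠ 0) :
    ∫⁻ x, gammaPDF a r x * gammaPDF b r (u - x) = gammaPDF (a + b) r u := by
  rcases lt_or_gt_of_ne hu with hneg | hpos
  · rw [gammaPDF_of_neg hneg]
    rw [← lintegral_zero]
    refine lintegral_congr (fun x => ?_)
    rcases lt_or_ge x 0 with hx | hx
    · rw [gammaPDF_of_neg hx, zero_mul]
    · rw [gammaPDF_of_neg (by linarith : u - x < 0), mul_zero]
  · -- u > 0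
    set K : ℝ := r ^ a / Real.Gamma a * (r ^ b / Real.Gamma b) * Real.exp (-(r * u)) with hK
    have hKnonneg : 0 ≤ K := by
      have := Real.Gamma_pos_of_pos ha
      have := Real.Gamma_pos_of_pos hb
      positivity
    have hGeq : ∀ x, gammaPDFReal a r x * gammaPDFReal b r (u - x)
        = (Icc 0 u).indicator (fun x => K * (x ^ (a - 1) * (u - x) ^ (b - 1))) x := by
      intro x
      unfold gammaPDFReal
      rcases le_or_gt 0 x with hx | hx
      · rcases le_or_gt x u with hxu | hxu
        · rw [if_pos hx, if_pos (by linarith : (0:ℝ) ≤ u - x),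
            indicator_of_mem (mem_Icc.mpr ⟨hx, hxu⟩), hK]
          have he : rexp (-(r * x)) * rexp (-(r * (u - x))) = rexp (-(r * u)) := by
            rw [← Real.exp_add]; ring_nf
          calc r ^ a / Gamma a * x ^ (a - 1) * rexp (-(r * x)) *
              (r ^ b / Gamma b * (u - x) ^ (b - 1) * rexp (-(r * (u - x))))
              = r ^ a / Gamma a * (r ^ b / Gamma b) *
                (rexp (-(r * x)) * rexp (-(r * (u - x)))) *
                (x ^ (a - 1) * (u - x) ^ (b - 1)) := by ring
            _ = _ := by rw [he]
        · rw [if_pos hx, if_neg (show ¬ (0:ℝ) ≤ u - x by push_neg; linarith), mul_zero,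
            indicator_of_notMem (fun hmem => absurd hmem.2 (not_le.mpr hxu))]
      · rw [if_neg (not_le.mpr hx), zero_mul,
          indicator_of_notMem (fun hmem => absurd hmem.1 (not_le.mpr hx))]
    have hint : IntegrableOn (fun x => K * (x ^ (a - 1) * (u - x) ^ (b - 1))) (Icc 0 u) := by
      rw [integrableOn_Icc_iff_integrableOn_Ioc]
      exact ((betaScaled_integrable ha hb hpos).const_mul K).1
    have hGint : Integrable (fun x => gammaPDFReal a r x * gammaPDFReal b r (u - x)) := by
      rw [funext hGeq, integrable_indicator_iff measurableSet_Icc]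
      exact hint
    calc ∫⁻ x, gammaPDF a r x * gammaPDF b r (u - x)
        = ∫⁻ x, ENNReal.ofReal (gammaPDFReal a r x * gammaPDFReal b r (u - x)) := by
          refine lintegral_congr (fun x => ?_)
          rw [gammaPDF, gammaPDF, ← ENNReal.ofReal_mul (gammaPDFReal_nonneg ha hr x)]
      _ = ENNReal.ofReal (∫ x, gammaPDFReal a r x * gammaPDFReal b r (u - x)) := by
          rw [ofReal_integral_eq_lintegral_ofReal hGint
            (ae_of_all _ (fun x => mul_nonneg (gammaPDFReal_nonneg ha hr x)
              (gammaPDFReal_nonneg hb hr _)))]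
      _ = gammaPDF (a + b) r u := by
          rw [funext hGeq, integral_indicator measurableSet_Icc, integral_const_mul,
            integral_Icc_eq_integral_Ioc, ← intervalIntegral.integral_of_le hpos.le,
            betaScaled_eq ha hb hpos, gammaPDF_of_nonneg hpos.le]
          congr 1
          rw [hK, rpow_add hr]
          have hGa := (Real.Gamma_pos_of_pos ha).ne'
          have hGb := (Real.Gamma_pos_of_pos hb).ne'
          field_simp

lemma gamma_conv {a b r : ℝ} (ha : 0 < a) (hb : 0 < b) (hr : 0 < r) :
    Measure.map (fun q : ℝ × ℝ => q.1 + q.2)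
      ((gammaMeasure a r).prod (gammaMeasure b r)) = gammaMeasure (a + b) r := by
  have hma := measurable_gammaPDFReal a r
  have hmb := measurable_gammaPDFReal b r
  have hmA : Measurable (gammaPDF a r) := hma.ennreal_ofReal
  have hmB : Measurable (gammaPDF b r) := hmb.ennreal_ofReal
  refine Measure.ext (fun s hs => ?_)
  have hadd : Measurable (fun q : ℝ × ℝ => q.1 + q.2) := measurable_add
  rw [Measure.map_apply hadd hs, gammaMeasure, gammaMeasure,
    Measure.prod_apply (hadd hs)]
  have step1 : ∀ x : ℝ, (volume.withDensity (gammaPDF b r))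
      (Prod.mk x ⁻¹' ((fun q : ℝ × ℝ => q.1 + q.2) ⁻¹' s))
      = ∫⁻ u in s, gammaPDF b r (u - x) := by
    intro x
    have hset : MeasurableSet (Prod.mk x ⁻¹' ((fun q : ℝ × ℝ => q.1 + q.2) ⁻¹' s)) :=
      measurable_prodMk_left (hadd hs)
    rw [withDensity_apply _ hset, ← lintegral_indicator hset _]
    have : ∀ y : ℝ, (Prod.mk x ⁻¹' ((fun q : ℝ × ℝ => q.1 + q.2) ⁻¹' s)).indicator
        (gammaPDF b r) y = s.indicator (fun u => gammaPDF b r (u - x)) (x + y) := by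
      intro y
      by_cases h : x + y ∈ s
      · rw [indicator_of_mem (by simpa using h), indicator_of_mem h]
        simp
      · rw [indicator_of_notMem (by simpa using h), indicator_of_notMem h]
    simp_rw [this]
    rw [lintegral_add_left_eq_self (s.indicator fun u => gammaPDF b r (u - x)) x,
      lintegral_indicator hs _]
  simp_rw [step1]
  have hφ : Measurable fun x => ∫⁻ u in s, gammaPDF b r (u - x) := by
    apply Measurable.lintegral_prod_right (f := fun x u => gammaPDF b r (u - x))
    exact hmB.comp (measurable_snd.sub measurable_fst)
  rw [lintegral_withDensity_eq_lintegral_mul _ hmA hφ]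
  have h1 : ∀ x, gammaPDF a r x * ∫⁻ u in s, gammaPDF b r (u - x)
      = ∫⁻ u in s, gammaPDF a r x * gammaPDF b r (u - x) := fun x =>
    (lintegral_const_mul _ (hmB.comp (measurable_id.sub_const x))).symm
  have swap : ∫⁻ x, (gammaPDF a r * fun x => ∫⁻ u in s, gammaPDF b r (u - x)) x
      = ∫⁻ u in s, ∫⁻ x, gammaPDF a r x * gammaPDF b r (u - x) := by
    calc ∫⁻ x, (gammaPDF a r * fun x => ∫⁻ u in s, gammaPDF b r (u - x)) x
        = ∫⁻ x, ∫⁻ u in s, gammaPDF a r x * gammaPDF b r (u - x) := by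
          simp_rw [Pi.mul_apply, h1]
      _ = ∫⁻ u in s, ∫⁻ x, gammaPDF a r x * gammaPDF b r (u - x) :=
          lintegral_lintegral_swap ((hmA.comp measurable_fst).mul
            (hmB.comp (measurable_snd.sub measurable_fst))).aemeasurable
  rw [swap, gammaMeasure, withDensity_apply _ hs]
  have h0 : ∀ᵐ u : ℝ ∂volume, u ≠ 0 := by
    simp [ae_iff]
  exact lintegral_congr_ae (ae_restrict_of_ae
    (h0.mono fun u hu => gamma_conv_pointwise ha hb hr hu))

lemma ggd_map_abs_rpow (p α : ℝ) (hp : 0 < p) (hα : 0 < α) :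
    Measure.map (fun z : ℝ => |z| ^ p)
      (volume.withDensity fun z =>
        ENNReal.ofReal (p / (2 * α * Real.Gamma (1 / p)) * Real.exp (-(|z| ^ p) / α ^ p)))
      = gammaMeasure (1 / p) ((α ^ p)⁻¹) := by
  have hΓ : 0 < Real.Gamma (1 / p) := Real.Gamma_pos_of_pos (by positivity)
  set C : ℝ := p / (2 * α * Real.Gamma (1 / p)) with hC
  have hCpos : 0 < C := by positivity
  have hb : 0 < (α ^ p)⁻¹ := by positivity
  have hf : Measurable fun z : ℝ => |z| ^ p :=
    measurable_id.abs.pow_const p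
  have hcont : Continuous fun z : ℝ => |z| ^ p := by
    rw [continuous_iff_continuousAt]
    intro z
    exact (Real.continuousAt_rpow_const _ _ (Or.inr hp.le)).comp continuous_abs.continuousAt
  have : IsProbabilityMeasure (gammaMeasure (1 / p) ((α ^ p)⁻¹)) :=
    isProbabilityMeasure_gammaMeasure (by positivity) hb
  refine (Measure.ext_of_Iic (gammaMeasure (1 / p) ((α ^ p)⁻¹)) _ (fun t => ?_)).symm
  rw [Measure.map_apply hf measurableSet_Iic,
    withDensity_apply _ (hf measurableSet_Iic),
    gammaMeasure, withDensity_apply _ measurableSet_Iic]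
  rcases lt_or_ge t 0 with ht | ht
  · -- both sides zero
    have h1 : ∫⁻ x in Iic t, gammaPDF (1/p) ((α ^ p)⁻¹) x = 0 := by
      rw [setLIntegral_congr_fun measurableSet_Iic
        (fun x (hx : x ≤ t) => gammaPDF_of_neg (lt_of_le_of_lt hx ht))]
      simp
    have h2 : (fun z : ℝ => |z| ^ p) ⁻¹' Iic t = ∅ := by
      ext z
      simp only [mem_preimage, mem_Iic, mem_empty_iff_false, iff_false, not_le]
      exact lt_of_lt_of_le ht (rpow_nonneg (abs_nonneg z) p)
    rw [h1, h2]
    simp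
  · -- t ≥ 0
    set c : ℝ := t ^ p⁻¹ with hc
    have hcnn : 0 ≤ c := rpow_nonneg ht _
    -- preimage is Icc (-c) c
    have hpre : (fun z : ℝ => |z| ^ p) ⁻¹' Iic t = Icc (-c) c := by
      ext z
      simp only [mem_preimage, mem_Iic, mem_Icc, ← abs_le]
      rw [← le_rpow_inv_iff_of_pos (abs_nonneg z) ht hp]
    rw [hpre]
    -- LHS as a real integral
    have hcontF : Continuous fun z : ℝ => C * Real.exp (-(|z| ^ p) / α ^ p) :=
      continuous_const.mul (Real.continuous_exp.comp ((hcont.neg).div_const _))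
    have hIntF : IntegrableOn (fun z : ℝ => C * Real.exp (-(|z| ^ p) / α ^ p)) (Icc (-c) c) :=
      hcontF.integrableOn_Icc
    have hlhs : ∫⁻ z in Icc (-c) c, ENNReal.ofReal (C * Real.exp (-(|z| ^ p) / α ^ p))
        = ENNReal.ofReal (∫ z in Icc (-c) c, C * Real.exp (-(|z| ^ p) / α ^ p)) :=
      (ofReal_integral_eq_lintegral_ofReal hIntF
        (ae_of_all _ (fun z => by positivity))).symm
    rw [hlhs]
    -- rewrite as integral of composed-with-abs function
    set G : ℝ → ℝ := (Icc 0 c).indicator (fun y => C * Real.exp (-(y ^ p) / α ^ p)) with hG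
    have habs : ∫ z in Icc (-c) c, C * Real.exp (-(|z| ^ p) / α ^ p) = ∫ z : ℝ, G |z| := by
      rw [← integral_indicator measurableSet_Icc]
      refine integral_congr_ae (ae_of_all _ (fun z => ?_))
      show (Icc (-c) c).indicator _ z = G |z|
      rw [hG]
      by_cases hz : z ∈ Icc (-c) c
      · rw [indicator_of_mem hz, indicator_of_mem (by
          rw [mem_Icc] at hz ⊢
          exact ⟨abs_nonneg z, abs_le.mpr ⟨hz.1, hz.2⟩⟩)]
      · rw [indicator_of_notMem hz, indicator_of_notMem (by
          rw [mem_Icc] at hz ⊢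
          intro hmem
          exact hz (abs_le.mp hmem.2))]
    rw [habs, integral_comp_abs (f := G)]
    -- substitution y = x ^ p on Ioi 0
    set g : ℝ → ℝ :=
      (Ioc 0 t).indicator (fun y => C / p * y ^ (p⁻¹ - 1) * Real.exp (-y / α ^ p)) with hg
    have hsub := integral_comp_rpow_Ioi g hp.ne'
    have hGg : ∫ x in Ioi (0:ℝ), G x = ∫ y in Ioi (0:ℝ), g y := by
      rw [← hsub]
      refine setIntegral_congr_fun measurableSet_Ioi (fun x hx => ?_)
      have hx0 : (0:ℝ) < x := hx
      have hxp : (0:ℝ) < x ^ p := rpow_pos_of_pos hx0 p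
      have hmemiff : x ^ p ∈ Ioc 0 t ↔ x ∈ Icc 0 c := by
        simp only [mem_Ioc, mem_Icc]
        constructor
        · rintro ⟨-, h2⟩
          exact ⟨hx0.le, (le_rpow_inv_iff_of_pos hx0.le ht hp).mpr h2⟩
        · rintro ⟨-, h2⟩
          exact ⟨hxp, (le_rpow_inv_iff_of_pos hx0.le ht hp).mp h2⟩
      by_cases hmem : x ^ p ∈ Ioc 0 t
      · rw [hG, hg, indicator_of_mem (hmemiff.mp hmem), indicator_of_mem hmem]
        rw [smul_eq_mul, abs_of_pos hp, ← Real.rpow_mul hx0.le,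
          show p * (p⁻¹ - 1) = 1 - p by field_simp]
        symm
        calc p * x ^ (p - 1) * (C / p * x ^ (1 - p) * Real.exp (-(x ^ p) / α ^ p))
            = (p * (C / p)) * (x ^ (p - 1) * x ^ (1 - p)) * Real.exp (-(x ^ p) / α ^ p) := by
              ring
          _ = C * Real.exp (-(x ^ p) / α ^ p) := by
              rw [← rpow_add hx0, show p - 1 + (1 - p) = 0 by ring, rpow_zero,
                mul_one, mul_div_cancel₀ _ hp.ne']
      · rw [hG, hg, indicator_of_notMem (fun hmm => hmem (hmemiff.mpr hmm)),
          indicator_of_notMem hmem, smul_zero]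
    rw [hGg, hg, setIntegral_indicator measurableSet_Ioc,
      show Ioi (0:ℝ) ∩ Ioc 0 t = Ioc 0 t by
        rw [inter_eq_right]; exact Ioc_subset_Ioi_self]
    -- now the RHS
    have hsplit : Iic t = Iic 0 ∪ Ioc 0 t := (Iic_union_Ioc_eq_Iic ht).symm
    rw [hsplit, lintegral_union measurableSet_Ioc (Iic_disjoint_Ioc le_rfl)]
    have hzero : ∫⁻ x in Iic 0, gammaPDF (1/p) ((α ^ p)⁻¹) x = 0 := by
      rw [← setLIntegral_congr (Iio_ae_eq_Iic (a := (0:ℝ)))]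
      exact lintegral_gammaPDF_of_nonpos le_rfl
    rw [hzero, zero_add]
    -- convert gamma side to a real integral
    set a : ℝ := 1 / p with ha
    set b : ℝ := (α ^ p)⁻¹ with hbb
    have hapos : 0 < a := by positivity
    have hIntG : IntegrableOn (fun x : ℝ => b ^ a / Real.Gamma a * x ^ (a - 1)
        * Real.exp (-(b * x))) (Ioc 0 t) := by
      have h1 : IntegrableOn (fun x : ℝ => x ^ (a - 1)) (Ioc 0 t) :=
        (intervalIntegral.intervalIntegrable_rpow' (by linarith)).1
      refine Integrable.mono (h1.const_mul (b ^ a / Real.Gamma a)) ?_ ?_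
      · exact ((((measurable_id.pow_const (a-1)).const_mul _).mul
          ((measurable_id.const_mul b).neg.exp)).aestronglyMeasurable)
      · rw [ae_restrict_iff' measurableSet_Ioc]
        refine ae_of_all _ (fun x hx => ?_)
        obtain ⟨hx0, hxt⟩ := hx
        have hxa : (0:ℝ) ≤ x ^ (a - 1) := rpow_nonneg hx0.le _
        have hKnn : (0:ℝ) ≤ b ^ a / Real.Gamma a := by positivity
        rw [Real.norm_eq_abs, Real.norm_eq_abs, abs_of_nonneg (by positivity),
          abs_of_nonneg (by positivity)]
        have hexp : Real.exp (-(b * x)) ≤ 1 :=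
          Real.exp_le_one_iff.mpr (by nlinarith)
        nlinarith [mul_nonneg hKnn hxa]
    have hgamma : ∫⁻ x in Ioc 0 t, gammaPDF a b x
        = ENNReal.ofReal (∫ x in Ioc 0 t,
            b ^ a / Real.Gamma a * x ^ (a - 1) * Real.exp (-(b * x))) := by
      rw [ofReal_integral_eq_lintegral_ofReal hIntG ((ae_restrict_iff'
          measurableSet_Ioc).mpr (ae_of_all _ (fun x hx => by
        have h1 := Real.Gamma_pos_of_pos hapos
        exact mul_nonneg (mul_nonneg (by positivity) (Real.rpow_nonneg hx.1.le _))
          (Real.exp_nonneg _))))]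
      refine setLIntegral_congr_fun measurableSet_Ioc (fun x hx => ?_)
      rw [gammaPDF_of_nonneg hx.1.le]
    rw [hgamma]
    -- final matching of the two real integrals
    congr 1
    rw [← integral_const_mul]
    refine setIntegral_congr_fun measurableSet_Ioc (fun y hy => ?_)
    obtain ⟨hy0, hyt⟩ := hy
    symm
    have hap : (α ^ p : ℝ) ^ (1/p : ℝ) = α := by
      rw [← Real.rpow_mul hα.le, mul_one_div_cancel hp.ne', Real.rpow_one]
    have hba : b ^ a = α⁻¹ := by
      rw [hbb, ha, Real.inv_rpow (Real.rpow_nonneg hα.le p), hap]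
    have hEE : Real.exp (-(b * y)) = Real.exp (-y / α ^ p) := by
      rw [hbb, inv_mul_eq_div, neg_div]
    have ha1 : a - 1 = p⁻¹ - 1 := by rw [ha, one_div]
    rw [hba, hEE, ha1]
    have h2C : 2 * (C / p) = α⁻¹ / Real.Gamma a := by
      rw [hC]
      field_simp
    calc 2 * (C / p * y ^ (p⁻¹ - 1) * Real.exp (-y / α ^ p))
        = (2 * (C / p)) * (y ^ (p⁻¹ - 1) * Real.exp (-y / α ^ p)) := by ring
      _ = α⁻¹ / Real.Gamma a * y ^ (p⁻¹ - 1) * Real.exp (-y / α ^ p) := by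
          rw [h2C]; ring

lemma pi_sum_gamma (p α : ℝ) (hp : 0 < p) (hα : 0 < α) (μ : Measure ℝ) [SigmaFinite μ]
    (hmap : Measure.map (fun z : ℝ => |z| ^ p) μ = gammaMeasure (1 / p) ((α ^ p)⁻¹)) :
    ∀ m : ℕ, Measure.map (fun z : Fin (m + 1) → ℝ => ∑ i, |z i| ^ p)
        (Measure.pi fun _ => μ)
      = gammaMeasure (((m : ℝ) + 1) / p) ((α ^ p)⁻¹) := by
  have hb : 0 < (α ^ p)⁻¹ := by positivity
  have hf : Measurable fun z : ℝ => |z| ^ p := measurable_id.abs.pow_const p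
  intro m
  induction m with
  | zero =>
    have hcomp : (fun z : Fin 1 → ℝ => ∑ i, |z i| ^ p)
        = (fun x : ℝ => |x| ^ p) ∘ (MeasurableEquiv.funUnique (Fin 1) ℝ) := by
      funext z
      rw [Fin.sum_univ_one]
      rfl
    rw [hcomp, ← Measure.map_map hf (MeasurableEquiv.funUnique (Fin 1) ℝ).measurable]
    erw [(measurePreserving_funUnique μ (Fin 1)).map_eq]
    rw [hmap]
    norm_num
  | succ m ih =>
    set S : (Fin (m + 1) → ℝ) → ℝ := fun z => ∑ i, |z i| ^ p with hS
    have hSm : Measurable S := Finset.measurable_sum _ fun i _ =>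
      ((measurable_pi_apply i).abs).pow_const p
    set e := MeasurableEquiv.piFinSuccAbove (fun _ : Fin (m + 2) => ℝ) 0 with he
    have hmp := measurePreserving_piFinSuccAbove (fun _ : Fin (m + 2) => μ) 0
    have hcomp : (fun z : Fin (m + 2) → ℝ => ∑ i, |z i| ^ p)
        = ((fun q : ℝ × ℝ => q.1 + q.2) ∘ (Prod.map (fun x : ℝ => |x| ^ p) S)) ∘ e := by
      funext z
      have hez : e z = (z 0, fun j => z ((0 : Fin (m + 2)).succAbove j)) := rfl
      simp only [Function.comp_apply, hez, Prod.map_apply, hS, Fin.succAbove_zero]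
      rw [Fin.sum_univ_succ]
    have hpm : Measurable (Prod.map (fun x : ℝ => |x| ^ p) S) :=
      (hf.comp measurable_fst).prodMk (hSm.comp measurable_snd)
    rw [hcomp, ← Measure.map_map (show Measurable ((fun q : ℝ × ℝ => q.1 + q.2)
        ∘ Prod.map (fun x : ℝ => |x| ^ p) S) from measurable_add.comp hpm) e.measurable,
      hmp.map_eq, ← Measure.map_map measurable_add hpm,
      ← Measure.map_prod_map _ _ hf hSm, hmap, ih, gamma_conv (by positivity)
        (by positivity) hb]
    congr 1
    push_cast
    ring

theorem ggd_sum_abs_pow_gamma (p α : ℝ) (hp : 0 < p) (hα : 0 < α)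
    (n : ℕ) (hn : 0 < n)
    (μ : Measure ℝ) [SigmaFinite μ]
    (hμ : μ = volume.withDensity fun z =>
      ENNReal.ofReal (p / (2 * α * Real.Gamma (1 / p)) * Real.exp (-(|z| ^ p) / α ^ p))) :
    Measure.map (fun z : Fin n → ℝ => ∑ i, |z i| ^ p) (Measure.pi fun _ => μ)
      = volume.withDensity fun x => ENNReal.ofReal
          (if 0 ≤ x then x ^ ((n : ℝ) / p - 1) * Real.exp (-x / α ^ p)
              / (Real.Gamma ((n : ℝ) / p) * α ^ n)
           else 0) := by
  obtain ⟨m, rfl⟩ := Nat.exists_eq_succ_of_ne_zero hn.ne'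
  have hmap : Measure.map (fun z : ℝ => |z| ^ p) μ = gammaMeasure (1 / p) ((α ^ p)⁻¹) := by
    rw [hμ]
    exact ggd_map_abs_rpow p α hp hα
  rw [pi_sum_gamma p α hp hα μ hmap m, gammaMeasure]
  have hcast : ((m : ℝ) + 1) = ((m + 1 : ℕ) : ℝ) := by push_cast; ring
  congr 1
  funext x
  rw [gammaPDF_eq]
  congr 1
  set a : ℝ := ((m + 1 : ℕ) : ℝ) / p with ha
  rw [hcast]
  by_cases hx : 0 ≤ x
  · rw [if_pos hx, if_pos hx]
    have hΓ : 0 < Real.Gamma a := Real.Gamma_pos_of_pos (by positivity)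
    have hra : ((α ^ p)⁻¹ : ℝ) ^ a = ((α : ℝ) ^ (m + 1 : ℕ))⁻¹ := by
      rw [Real.inv_rpow (Real.rpow_nonneg hα.le p), ← Real.rpow_natCast α (m + 1),
        ← Real.rpow_mul hα.le, ha,
        show p * (((m + 1 : ℕ) : ℝ) / p) = ((m + 1 : ℕ) : ℝ) by field_simp]
    have hexp : Real.exp (-((α ^ p)⁻¹ * x)) = Real.exp (-x / α ^ p) := by
      rw [inv_mul_eq_div, neg_div]
    rw [hra, hexp]
    have hαn : (0:ℝ) < α ^ (m + 1 : ℕ) := by positivity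
    have hcomb : ((α : ℝ) ^ (m + 1 : ℕ))⁻¹ / Real.Gamma a
        = (Real.Gamma a * α ^ (m + 1 : ℕ))⁻¹ := by
      rw [mul_inv]
      ring
    rw [hcomb, div_eq_mul_inv, Nat.succ_eq_add_one]
    rw [ha]
    ring
  · rw [if_neg hx, if_neg hx]
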